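/- Let R₀ be a Noetherian commutative ring, u ∈ R₀ an element contained in the Jacobson radical of R₀ (equivalently, in every maximal ideal of R₀), and N a finitely generated flat R₀-module. Let R₀[[T]] denote the power series ring and set M := R₀[[T]] ⊗_{R₀} N. Then u − T is a non-zero-divisor on M, and the quotient M/(u − T)M is a flat R₀-module. -/

import Mathlib

set_option maxHeartbeats 2000000

open scoped TensorProduct

namespace FlatPSAux
open PowerSeries Finset

variable {R₀ : Type*} [CommRing R₀] (u : R₀)

section Basic

lemma u_mem_jacobson (hu : ∀ m : Ideal R₀, m.IsMaximal → u ∈ m) :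
    u ∈ Ideal.jacobson (⊥ : Ideal R₀) := by
  rw [Ideal.jacobson, Submodule.mem_sInf]
  exact fun J hJ => hu J hJ.2

lemma eq_zero_of_forall_dvd [IsNoetherianRing R₀]
    (hu : ∀ m : Ideal R₀, m.IsMaximal → u ∈ m)
    (x : R₀) (h : ∀ k : ℕ, u ^ k ∣ x) : x = 0 := by
  have hx : x ∈ (⨅ k : ℕ, (Ideal.span {u}) ^ k • (⊤ : Submodule R₀ R₀)) := by
    refine Submodule.mem_iInf _ |>.2 fun k => ?_
    obtain ⟨y, hy⟩ := h k
    have hmem : u ^ k ∈ (Ideal.span {u}) ^ k :=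
      Ideal.pow_mem_pow (Ideal.mem_span_singleton_self u) k
    have h2 : u ^ k • y ∈ (Ideal.span {u}) ^ k • (⊤ : Submodule R₀ R₀) :=
      Submodule.smul_mem_smul hmem Submodule.mem_top
    rw [hy]; exact h2
  obtain ⟨r, hr⟩ := (Ideal.mem_iInf_smul_pow_eq_bot_iff (Ideal.span {u}) x).mp hx
  have hrj : (r : R₀) ∈ Ideal.jacobson (⊥ : Ideal R₀) := by
    obtain ⟨t, ht⟩ := Ideal.mem_span_singleton'.mp r.2
    rw [← ht]
    exact Ideal.mul_mem_left _ t (u_mem_jacobson u hu)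
  have hunit : IsUnit ((r : R₀) * (-1) + 1) := Ideal.mem_jacobson_bot.mp hrj (-1)
  have heq : ((r : R₀) * (-1) + 1) * x = ((r : R₀) * (-1) + 1) * 0 := by
    rw [smul_eq_mul] at hr
    ring_nf
    rw [mul_comm] at hr
    linear_combination -hr
  exact hunit.mul_left_cancel heq

end Basic

section PS

/-- The partial sum `∑_{k<n} u^k f_k`. -/
noncomputable def P (n : ℕ) (f : PowerSeries R₀) : R₀ :=
  ∑ k ∈ Finset.range n, u ^ k * PowerSeries.coeff k f

lemma P_succ (n : ℕ) (f : PowerSeries R₀) :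
    P u (n + 1) f = P u n f + u ^ n * PowerSeries.coeff n f := by
  simp [P, Finset.sum_range_succ]

lemma coeff_key (g : PowerSeries R₀) (n : ℕ) :
    PowerSeries.coeff (n + 1) ((PowerSeries.C u - PowerSeries.X) * g) =
      u * PowerSeries.coeff (n + 1) g - PowerSeries.coeff n g := by
  simp [sub_mul, PowerSeries.coeff_C_mul, PowerSeries.coeff_succ_X_mul]

lemma coeff_key0 (g : PowerSeries R₀) :
    PowerSeries.coeff 0 ((PowerSeries.C u - PowerSeries.X) * g) =
      u * PowerSeries.coeff 0 g := by
  simp [sub_mul, PowerSeries.coeff_C_mul, PowerSeries.coeff_zero_X_mul]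

lemma P_mul_key (g : PowerSeries R₀) (n : ℕ) :
    P u (n + 1) ((PowerSeries.C u - PowerSeries.X) * g) =
      u ^ (n + 1) * PowerSeries.coeff n g := by
  induction n with
  | zero => simp [P, coeff_key0]
  | succ n ih =>
      rw [P_succ, ih, coeff_key]
      ring

/-- If all partial sums `P n f` are divisible by `u^n`, then `f` is a multiple of `C u - X`.
This uses Noetherianity of `R₀` through the stabilization of the annihilator chain of `u`. -/
lemma exists_g [IsNoetherianRing R₀] (f : PowerSeries R₀)
    (h : ∀ n, ∃ c, P u n f = u ^ n * c) :
    ∃ g, (PowerSeries.C u - PowerSeries.X) * g = f := by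
  choose c hc using h
  -- stabilization of the annihilator chain
  let chain : ℕ →o Submodule R₀ R₀ :=
    ⟨fun n => LinearMap.ker (LinearMap.lsmul R₀ R₀ (u ^ n)), by
      intro a b hab x hx
      simp only [LinearMap.mem_ker, LinearMap.lsmul_apply, smul_eq_mul] at hx ⊢
      obtain ⟨j, rfl⟩ := Nat.exists_eq_add_of_le hab
      rw [pow_add, mul_comm (u ^ a), mul_assoc, hx, mul_zero]⟩
  obtain ⟨K, hK⟩ := monotone_stabilizes_iff_noetherian.mpr inferInstance chain
  set d : ℕ → R₀ := fun n =>
    u ^ K * c (n + K) - ∑ j ∈ Finset.range K, u ^ j * PowerSeries.coeff (n + j) f with hd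
  have hd0 : d 0 = 0 := by
    have h0 : P u K f = u ^ K * c K := hc K
    simp only [hd, zero_add]
    rw [← h0]
    simp [P]
  have hstep : ∀ n, u * d (n + 1) = d n + PowerSeries.coeff n f := by
    intro n
    have hv0 : u ^ (n + K) *
        (u * c (n + K + 1) - c (n + K) - PowerSeries.coeff (n + K) f) = 0 := by
      have h1 := hc (n + K + 1)
      have h2 := hc (n + K)
      have h3 := P_succ u (n + K) f
      linear_combination -h1 + h2 + h3
    have hvK : u ^ K *
        (u * c (n + K + 1) - c (n + K) - PowerSeries.coeff (n + K) f) = 0 := by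
      have hmem : (u * c (n + K + 1) - c (n + K) - PowerSeries.coeff (n + K) f)
          ∈ chain (n + K) := by
        simp only [chain, LinearMap.mem_ker, LinearMap.lsmul_apply, smul_eq_mul,
          OrderHom.coe_mk]
        exact hv0
      rw [← hK (n + K) (by omega)] at hmem
      exact hmem
    have hts : ∑ j ∈ Finset.range K, u ^ (j + 1) * PowerSeries.coeff (n + j + 1) f
        = (∑ j ∈ Finset.range K, u ^ j * PowerSeries.coeff (n + j) f)
          + u ^ K * PowerSeries.coeff (n + K) f - PowerSeries.coeff n f := by
      have h1 := Finset.sum_range_succ' (fun i => u ^ i * PowerSeries.coeff (n + i) f) K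
      have h2 := Finset.sum_range_succ (fun i => u ^ i * PowerSeries.coeff (n + i) f) K
      simp only [← Nat.add_assoc, Nat.add_zero, pow_zero, one_mul] at h1 h2
      linear_combination h2 - h1
    have hmul : u * (∑ j ∈ Finset.range K, u ^ j * PowerSeries.coeff (n + j + 1) f)
        = ∑ j ∈ Finset.range K, u ^ (j + 1) * PowerSeries.coeff (n + j + 1) f := by
      rw [Finset.mul_sum]
      exact Finset.sum_congr rfl fun j _ => by ring
    have hidx : ∀ j : ℕ, n + 1 + j = n + j + 1 := fun j => by omega
    simp only [hd, hidx]
    linear_combination hvK - hts - hmul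
  refine ⟨PowerSeries.mk (fun n => d (n + 1)), ?_⟩
  ext n
  cases n with
  | zero =>
      rw [coeff_key0, PowerSeries.coeff_mk, hstep 0, hd0, zero_add]
  | succ n =>
      rw [coeff_key, PowerSeries.coeff_mk, PowerSeries.coeff_mk, hstep (n + 1)]
      ring

/-- `C u - X` is a non-zero-divisor in `R₀[[X]]`. -/
lemma mul_eq_zero_imp [IsNoetherianRing R₀]
    (hu : ∀ m : Ideal R₀, m.IsMaximal → u ∈ m)
    (g : PowerSeries R₀) (h : (PowerSeries.C u - PowerSeries.X) * g = 0) : g = 0 := by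
  have hrec : ∀ n, PowerSeries.coeff n g = u * PowerSeries.coeff (n + 1) g := by
    intro n
    have := coeff_key u g n
    rw [h, map_zero] at this
    linear_combination this
  have hpow : ∀ n k, PowerSeries.coeff n g = u ^ k * PowerSeries.coeff (n + k) g := by
    intro n k
    induction k with
    | zero => simp
    | succ k ih =>
        have hi : n + (k + 1) = n + k + 1 := by omega
        rw [hi, ih, hrec (n + k)]
        ring
  ext n
  rw [map_zero]
  exact eq_zero_of_forall_dvd u hu _ (fun k => ⟨PowerSeries.coeff (n + k) g, hpow n k⟩)

end PS

section Phi

lemma smul_top_ideal {S : Type*} [CommRing S] (J : Ideal S) :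
    J • (⊤ : Submodule S S) = J := by
  rw [smul_eq_mul, Ideal.mul_top]

lemma mem_pow_smul_top (n : ℕ) (x : R₀) :
    x ∈ (Ideal.span {u}) ^ n • (⊤ : Submodule R₀ R₀) ↔ ∃ c, x = u ^ n * c := by
  rw [smul_top_ideal, Ideal.span_singleton_pow, Ideal.mem_span_singleton']
  constructor
  · rintro ⟨c, rfl⟩; exact ⟨c, (mul_comm _ _)⟩
  · rintro ⟨c, rfl⟩; exact ⟨c, (mul_comm _ _)⟩

/-- `P` as a linear map. -/
noncomputable def Pl (n : ℕ) : PowerSeries R₀ →ₗ[R₀] R₀ :=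
  ∑ k ∈ Finset.range n, u ^ k • (PowerSeries.coeff k)

lemma Pl_apply (n : ℕ) (f : PowerSeries R₀) : Pl u n f = P u n f := by
  simp [Pl, P, LinearMap.sum_apply, smul_eq_mul]

lemma P_sub_mem (f : PowerSeries R₀) {m n : ℕ} (hmn : m ≤ n) :
    P u n f - P u m f ∈ (Ideal.span {u}) ^ m • (⊤ : Submodule R₀ R₀) := by
  induction n with
  | zero =>
      obtain rfl : m = 0 := Nat.le_zero.mp hmn
      simpa using Submodule.zero_mem _
  | succ n ih =>
      rcases Nat.lt_or_ge m (n + 1) with hlt | hge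
      · have hmn' : m ≤ n := by omega
        have h1 := ih hmn'
        have h2 : u ^ n * PowerSeries.coeff n f
            ∈ (Ideal.span {u}) ^ m • (⊤ : Submodule R₀ R₀) := by
          have hmem : u ^ m ∈ (Ideal.span {u}) ^ m :=
            Ideal.pow_mem_pow (Ideal.mem_span_singleton_self u) m
          have h3 : u ^ m • (u ^ (n - m) * PowerSeries.coeff n f)
              ∈ (Ideal.span {u}) ^ m • (⊤ : Submodule R₀ R₀) :=
            Submodule.smul_mem_smul hmem Submodule.mem_top
          have heq : u ^ m * (u ^ (n - m) * PowerSeries.coeff n f)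
              = u ^ n * PowerSeries.coeff n f := by
            rw [← mul_assoc, ← pow_add]
            congr 2
            omega
          rw [← heq]; exact h3
        have := Submodule.add_mem _ h1 h2
        rw [P_succ u n f]
        convert this using 1
        ring
      · obtain rfl : m = n + 1 := by omega
        simpa using Submodule.zero_mem _

variable (R₀) in
/-- The comparison map from `R₀[[X]]` to the `u`-adic completion of `R₀`. -/
noncomputable def phi : PowerSeries R₀ →ₗ[R₀] AdicCompletion (Ideal.span {u}) R₀ :=
  AdicCompletion.lift (Ideal.span {u})
    (fun n => (Submodule.mkQ _) ∘ₗ Pl u n)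
    (by
      intro m n hle
      ext f
      simp only [LinearMap.comp_apply, Submodule.mkQ_apply, AdicCompletion.transitionMap,
        Submodule.factorPow, Submodule.factor, Submodule.mapQ_apply, LinearMap.id_apply]
      rw [Submodule.Quotient.eq, Pl_apply, Pl_apply]
      exact P_sub_mem u f hle)

lemma phi_val (n : ℕ) (f : PowerSeries R₀) :
    (phi R₀ u f).val n = Submodule.Quotient.mk (P u n f) := by
  rw [← Pl_apply]
  rfl

lemma phi_surjective : Function.Surjective (phi R₀ u) := by
  intro x
  induction x using AdicCompletion.induction_on with
  | h r =>
    have hs : ∀ j : ℕ, ∃ s, r (j + 1) - r j = u ^ j * s := by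
      intro j
      have hcau := r.property (Nat.le_succ j)
      rw [SModEq] at hcau
      have hmem : r (j + 1) - r j ∈ (Ideal.span {u}) ^ j • (⊤ : Submodule R₀ R₀) := by
        rw [← Submodule.Quotient.eq]
        exact hcau.symm
      rwa [mem_pow_smul_top] at hmem
    choose s hs using hs
    refine ⟨PowerSeries.mk (fun n => if n = 0 then r 1 else s n), ?_⟩
    have hP : ∀ n, P u (n + 1) (PowerSeries.mk (fun n => if n = 0 then r 1 else s n))
        = r (n + 1) := by
      intro n
      induction n with
      | zero => simp [P]
      | succ n ih =>
          rw [P_succ, ih, PowerSeries.coeff_mk]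
          simp only [Nat.succ_ne_zero, if_false]
          rw [← hs (n + 1)]
          ring
    ext n
    rw [phi_val]
    cases n with
    | zero =>
        show _ = Submodule.Quotient.mk (r 0)
        rw [Submodule.Quotient.eq]
        simp
    | succ n =>
        show _ = Submodule.Quotient.mk (r (n + 1))
        rw [hP n]

lemma mem_span_smul_top_iff (f : PowerSeries R₀) :
    f ∈ (Ideal.span {PowerSeries.C u - PowerSeries.X} •
        (⊤ : Submodule (PowerSeries R₀) (PowerSeries R₀))) ↔
      ∃ g, (PowerSeries.C u - PowerSeries.X) * g = f := by
  rw [smul_top_ideal, Ideal.mem_span_singleton']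
  constructor
  · rintro ⟨g, rfl⟩; exact ⟨g, mul_comm _ _⟩
  · rintro ⟨g, rfl⟩; exact ⟨g, mul_comm _ _⟩

lemma phi_ker [IsNoetherianRing R₀] :
    LinearMap.ker (phi R₀ u) =
      (Ideal.span {PowerSeries.C u - PowerSeries.X} •
        (⊤ : Submodule (PowerSeries R₀) (PowerSeries R₀))).restrictScalars R₀ := by
  ext f
  simp only [LinearMap.mem_ker, Submodule.restrictScalars_mem]
  rw [mem_span_smul_top_iff]
  constructor
  · intro h0
    apply exists_g u f
    intro n
    have hval : (phi R₀ u f).val n = 0 := by rw [h0]; rfl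
    rw [phi_val] at hval
    have hmem := (Submodule.Quotient.mk_eq_zero _).mp hval
    rwa [mem_pow_smul_top] at hmem
  · rintro ⟨g, rfl⟩
    ext n
    rw [phi_val]
    show _ = (0 : AdicCompletion (Ideal.span {u}) R₀).val n
    rw [AdicCompletion.val_zero_apply, Submodule.Quotient.mk_eq_zero]
    cases n with
    | zero => simp [P]
    | succ n =>
        rw [P_mul_key, mem_pow_smul_top]
        exact ⟨PowerSeries.coeff n g, rfl⟩

variable (R₀) in
/-- The quotient `R₀[[X]]/(C u - X)` is `R₀`-linearly the `u`-adic completion of `R₀`. -/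
noncomputable def quotEquivCompletion [IsNoetherianRing R₀] :
    (PowerSeries R₀ ⧸ (Ideal.span {PowerSeries.C u - PowerSeries.X} •
        (⊤ : Submodule (PowerSeries R₀) (PowerSeries R₀))))
      ≃ₗ[R₀] AdicCompletion (Ideal.span {u}) R₀ :=
  (Submodule.Quotient.restrictScalarsEquiv R₀ _).symm.trans <|
    (Submodule.quotEquivOfEq _ _ (phi_ker u).symm).trans <|
      (phi R₀ u).quotKerEquivOfSurjective (phi_surjective u)

lemma flat_quot [IsNoetherianRing R₀] :
    Module.Flat R₀ (PowerSeries R₀ ⧸ (Ideal.span {PowerSeries.C u - PowerSeries.X} •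
        (⊤ : Submodule (PowerSeries R₀) (PowerSeries R₀)))) := by
  have hflat : Module.Flat R₀ (AdicCompletion (Ideal.span {u}) R₀) :=
    inferInstance
  exact Module.Flat.of_linearEquiv (quotEquivCompletion R₀ u)

end Phi

end FlatPSAux

/-- **Flatness of `N[[T]]/(u − T)` over `R₀`.**
Let `R₀` be a Noetherian commutative ring, `u ∈ R₀` an element of the Jacobson radical
(i.e. contained in every maximal ideal), and `N` a finitely generated flat `R₀`-module.
Set `M := R₀[[T]] ⊗_{R₀} N`.  Then `u − T` is a non-zero-divisor on `M`, and the quotient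
`M/(u − T)M` is a flat `R₀`-module. -/
theorem flat_quotient_powerSeries_tensor_of_mem_jacobson
    {R₀ : Type*} [CommRing R₀] [IsNoetherianRing R₀]
    (u : R₀) (hu : ∀ m : Ideal R₀, m.IsMaximal → u ∈ m)
    (N : Type*) [AddCommGroup N] [Module R₀ N] [Module.Finite R₀ N] [Module.Flat R₀ N] :
    IsSMulRegular (PowerSeries R₀ ⊗[R₀] N) (PowerSeries.C u - PowerSeries.X) ∧
    Module.Flat R₀
      ((PowerSeries R₀ ⊗[R₀] N) ⧸
        (Ideal.span {PowerSeries.C u - PowerSeries.X} •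
          (⊤ : Submodule (PowerSeries R₀) (PowerSeries R₀ ⊗[R₀] N)))) := by
  set a : PowerSeries R₀ := PowerSeries.C u - PowerSeries.X with ha
  constructor
  · -- non-zero-divisor
    have hinj : Function.Injective (LinearMap.mulLeft R₀ a) := by
      intro f g hfg
      simp only [LinearMap.mulLeft_apply] at hfg
      have hz : a * (f - g) = 0 := by rw [mul_sub, hfg, sub_self]
      have := FlatPSAux.mul_eq_zero_imp u hu _ (by rw [← ha]; exact hz)
      exact sub_eq_zero.mp this
    have h2 : Function.Injective ((LinearMap.mulLeft R₀ a).rTensor N) :=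
      Module.Flat.rTensor_preserves_injective_linearMap _ hinj
    have hfun : ∀ z : PowerSeries R₀ ⊗[R₀] N,
        (LinearMap.mulLeft R₀ a).rTensor N z = a • z := by
      intro z
      induction z using TensorProduct.induction_on with
      | zero => simp
      | tmul f n =>
          rw [LinearMap.rTensor_tmul, TensorProduct.smul_tmul']
          rfl
      | add x y hx hy => rw [map_add, smul_add, hx, hy]
    intro x y hxy
    apply h2
    rw [hfun, hfun]
    exact hxy
  · -- flatness
    haveI hflat1 : Module.Flat R₀ (PowerSeries R₀ ⧸ (Ideal.span {a} •
        (⊤ : Submodule (PowerSeries R₀) (PowerSeries R₀)))) := FlatPSAux.flat_quot u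
    have e0 : (PowerSeries R₀ ⧸ Ideal.span {a}) ≃ₗ[PowerSeries R₀]
        (PowerSeries R₀ ⧸ (Ideal.span {a} •
          (⊤ : Submodule (PowerSeries R₀) (PowerSeries R₀)))) :=
      Submodule.quotEquivOfEq _ _ (FlatPSAux.smul_top_ideal _).symm
    haveI hflat2 : Module.Flat R₀ (PowerSeries R₀ ⧸ Ideal.span {a}) :=
      Module.Flat.of_linearEquiv (LinearEquiv.restrictScalars R₀ e0)
    haveI hflat3 : Module.Flat R₀ ((PowerSeries R₀ ⧸ Ideal.span {a}) ⊗[R₀] N) :=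
      inferInstance
    have e1 : ((PowerSeries R₀ ⧸ Ideal.span {a}) ⊗[PowerSeries R₀] (PowerSeries R₀ ⊗[R₀] N))
        ≃ₗ[PowerSeries R₀]
        ((PowerSeries R₀ ⊗[R₀] N) ⧸ (Ideal.span {a} •
          (⊤ : Submodule (PowerSeries R₀) (PowerSeries R₀ ⊗[R₀] N)))) :=
      TensorProduct.quotTensorEquivQuotSMul (PowerSeries R₀ ⊗[R₀] N) (Ideal.span {a})
    have e2 : ((PowerSeries R₀ ⧸ Ideal.span {a}) ⊗[PowerSeries R₀] (PowerSeries R₀ ⊗[R₀] N))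
        ≃ₗ[PowerSeries R₀] ((PowerSeries R₀ ⧸ Ideal.span {a}) ⊗[R₀] N) :=
      TensorProduct.AlgebraTensorModule.cancelBaseChange R₀ (PowerSeries R₀)
        (PowerSeries R₀) (PowerSeries R₀ ⧸ Ideal.span {a}) N
    have e3 := (e1.symm.trans e2).restrictScalars R₀
    exact Module.Flat.of_linearEquiv e3
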